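/- Let p ∈ [1,∞) and let w := (w_n)_{n∈ℕ} be a bounded sequence of scalars in 𝕂. The unilateral weighted backward shift B_w : (x₁,x₂,x₃,…) ∈ ℓ^p(ℕ) ↦ (w₁x₂, w₂x₃, …) ∈ ℓ^p(ℕ) is Li-Yorke chaotic if and only if sup{ |w_i ⋯ w_j| : i, j ∈ ℕ, i ≤ j } = ∞. -/

import Mathlib

open Filter Topology MeasureTheory ENNReal

noncomputable section

def LiYorkePair {M : Type*} [PseudoMetricSpace M] (g : M → M) (x y : M) : Prop :=
  Filter.liminf (fun n : ℕ => edist (g^[n] x) (g^[n] y)) Filter.atTop = 0 ∧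
  0 < Filter.limsup (fun n : ℕ => edist (g^[n] x) (g^[n] y)) Filter.atTop

def LiYorkeChaotic {M : Type*} [PseudoMetricSpace M] (g : M → M) : Prop :=
  ∃ S : Set M, ¬ S.Countable ∧ S.Pairwise (LiYorkePair g)

def DenselyLiYorkeChaotic {M : Type*} [PseudoMetricSpace M] (g : M → M) : Prop :=
  ∃ S : Set M, Dense S ∧ ¬ S.Countable ∧ S.Pairwise (LiYorkePair g)

section Aux
set_option linter.unusedSectionVars false
variable {𝕂 : Type} [RCLike 𝕂] {p : ℝ≥0∞} [Fact (1 ≤ p)]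

namespace LYAux


variable {𝕂 : Type} [RCLike 𝕂] {p : ℝ≥0∞} [Fact (1 ≤ p)]

lemma hpt (hp2 : p ≠ ⊤) : 0 < p.toReal :=
  ENNReal.toReal_pos (zero_lt_one.trans_le (Fact.out : 1 ≤ p)).ne' hp2

lemma hp0 : p ≠ 0 := (zero_lt_one.trans_le (Fact.out : 1 ≤ p)).ne'

lemma shift_memℓp (hp2 : p ≠ ⊤) (z : lp (fun _ : ℕ => 𝕂) p) (n : ℕ) :
    Memℓp (fun m => (z : ℕ → 𝕂) (m + n)) p := by
  apply memℓp_gen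
  have hs : Summable fun m => ‖(z : ℕ → 𝕂) m‖ ^ p.toReal := (lp.memℓp z).summable (hpt hp2)
  exact hs.comp_injective (add_left_injective n)

lemma lp_norm_le (hp2 : p ≠ ⊤) (f g : lp (fun _ : ℕ => 𝕂) p)
    (h : ∀ m, ‖(f : ℕ → 𝕂) m‖ ≤ ‖(g : ℕ → 𝕂) m‖) : ‖f‖ ≤ ‖g‖ := by
  have h1 := hpt (p := p) hp2
  rw [lp.norm_eq_tsum_rpow h1 f, lp.norm_eq_tsum_rpow h1 g]
  apply Real.rpow_le_rpow (tsum_nonneg fun m => by positivity)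
  · exact Summable.tsum_le_tsum (fun m => Real.rpow_le_rpow (norm_nonneg _) (h m) h1.le)
      ((lp.memℓp f).summable h1) ((lp.memℓp g).summable h1)
  · positivity

lemma shift_norm_le (hp2 : p ≠ ⊤) (z : lp (fun _ : ℕ => 𝕂) p) (n : ℕ) :
    ‖(⟨fun m => (z : ℕ → 𝕂) (m + n), shift_memℓp hp2 z n⟩ : lp (fun _ : ℕ => 𝕂) p)‖
      ≤ ‖z‖ := by
  have h1 := hpt (p := p) hp2
  rw [lp.norm_eq_tsum_rpow h1, lp.norm_eq_tsum_rpow h1]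
  apply Real.rpow_le_rpow (tsum_nonneg fun m => by positivity)
  · exact tsum_comp_le_tsum_of_inj ((lp.memℓp z).summable h1) (fun m => by positivity)
      (add_left_injective n)
  · positivity


end LYAux
end Aux

section withT
set_option linter.unusedSectionVars false
variable {𝕂 : Type} [RCLike 𝕂] {p : ℝ≥0∞} [Fact (1 ≤ p)]
  (w : ℕ → 𝕂) (T : lp (fun _ : ℕ => 𝕂) p → lp (fun _ : ℕ => 𝕂) p)
  (hT : ∀ (x : lp (fun _ : ℕ => 𝕂) p) (n : ℕ),
      (T x : ℕ → 𝕂) n = w n * (x : ℕ → 𝕂) (n + 1))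

namespace LYAux

include hT


include hT

lemma iter_apply (n : ℕ) (z : lp (fun _ : ℕ => 𝕂) p) (m : ℕ) :
    (T^[n] z : ℕ → 𝕂) m = (∏ t ∈ Finset.Ico m (m + n), w t) * (z : ℕ → 𝕂) (m + n) := by
  induction n generalizing z m with
  | zero => simp
  | succ n ih =>
    rw [Function.iterate_succ_apply, ih (T z) m, hT z (m + n)]
    rw [show m + (n+1) = (m+n)+1 by omega, Finset.prod_Ico_succ_top (Nat.le_add_right m n)]
    ring

lemma T_smul (c : 𝕂) (z : lp (fun _ : ℕ => 𝕂) p) : T (c • z) = c • T z := by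
  apply lp.ext; funext m
  rw [hT, lp.coeFn_smul, lp.coeFn_smul]
  simp [hT z m, Pi.smul_apply, smul_eq_mul]
  ring

lemma iter_smul (n : ℕ) (c : 𝕂) (z : lp (fun _ : ℕ => 𝕂) p) :
    T^[n] (c • z) = c • T^[n] z := by
  induction n generalizing z with
  | zero => simp
  | succ n ih => rw [Function.iterate_succ_apply, T_smul w T hT, ih,
      Function.iterate_succ_apply]

lemma T_sub (x y : lp (fun _ : ℕ => 𝕂) p) : T x - T y = T (x - y) := by
  apply lp.ext; funext m
  rw [lp.coeFn_sub, Pi.sub_apply, hT, hT, hT, lp.coeFn_sub, Pi.sub_apply]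
  ring

lemma iter_sub (n : ℕ) (x y : lp (fun _ : ℕ => 𝕂) p) :
    T^[n] x - T^[n] y = T^[n] (x - y) := by
  induction n generalizing x y with
  | zero => simp
  | succ n ih => rw [Function.iterate_succ_apply, Function.iterate_succ_apply,
      Function.iterate_succ_apply, ih, T_sub w T hT]

lemma norm_iter_le_shift (hp2 : p ≠ ⊤) {n : ℕ} {D : ℝ} (hD : 0 ≤ D)
    (hprod : ∀ m, ‖∏ t ∈ Finset.Ico m (m + n), w t‖ ≤ D)
    (z : lp (fun _ : ℕ => 𝕂) p) :
    ‖T^[n] z‖ ≤ D * ‖(⟨fun m => (z : ℕ → 𝕂) (m + n), shift_memℓp hp2 z n⟩ :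
      lp (fun _ : ℕ => 𝕂) p)‖ := by
  set g : lp (fun _ : ℕ => 𝕂) p :=
    ((D : 𝕂)) • (⟨fun m => (z : ℕ → 𝕂) (m + n), shift_memℓp hp2 z n⟩ :
      lp (fun _ : ℕ => 𝕂) p) with hg
  have h1 : ‖T^[n] z‖ ≤ ‖g‖ := by
    apply lp_norm_le hp2
    intro m
    rw [iter_apply w T hT n z m, hg, lp.coeFn_smul, Pi.smul_apply]
    rw [norm_mul, smul_eq_mul, norm_mul, RCLike.norm_ofReal, abs_of_nonneg hD]
    exact mul_le_mul_of_nonneg_right (hprod m) (norm_nonneg _)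
  refine h1.trans ?_
  rw [hg, norm_smul, RCLike.norm_ofReal, abs_of_nonneg hD]

lemma norm_iter_le (hp2 : p ≠ ⊤) {n : ℕ} {D : ℝ} (hD : 0 ≤ D)
    (hprod : ∀ m, ‖∏ t ∈ Finset.Ico m (m + n), w t‖ ≤ D)
    (z : lp (fun _ : ℕ => 𝕂) p) : ‖T^[n] z‖ ≤ D * ‖z‖ :=
  (norm_iter_le_shift w T hT hp2 hD hprod z).trans
    (mul_le_mul_of_nonneg_left (shift_norm_le hp2 z n) hD)
lemma tendsto_iter_zero (hp2 : p ≠ ⊤) {K : ℝ}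
    (hK : ∀ i j : ℕ, i ≤ j → ‖∏ t ∈ Finset.Icc i j, w t‖ ≤ K)
    (z : lp (fun _ : ℕ => 𝕂) p) :
    Tendsto (fun n => ‖T^[n] z‖) atTop (𝓝 0) := by
  have h1 : 0 < p.toReal := ENNReal.toReal_pos (zero_lt_one.trans_le (Fact.out : 1 ≤ p)).ne' hp2
  set K1 := max K 1 with hK1
  have hK10 : 0 ≤ K1 := le_trans zero_le_one (le_max_right _ _)
  have hprod : ∀ n m : ℕ, ‖∏ t ∈ Finset.Ico m (m + n), w t‖ ≤ K1 := by
    intro n m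
    cases n with
    | zero =>
      simp only [Nat.add_zero, Finset.Ico_self, Finset.prod_empty, norm_one]
      exact le_max_right K 1
    | succ n =>
      have : m + (n + 1) = (m + n) + 1 := by omega
      rw [this, Finset.Ico_add_one_right_eq_Icc]
      exact le_trans (hK m (m + n) (Nat.le_add_right m n)) (le_max_left _ _)
  -- the shifted tail norms tend to zero
  have hsum : Summable fun m => ‖(z : ℕ → 𝕂) m‖ ^ p.toReal := (lp.memℓp z).summable h1
  have htail : Tendsto (fun n => ∑' m, ‖(z : ℕ → 𝕂) (m + n)‖ ^ p.toReal) atTop (𝓝 0) :=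
    tendsto_sum_nat_add fun m => ‖(z : ℕ → 𝕂) m‖ ^ p.toReal
  have htail2 : Tendsto
      (fun n => (∑' m, ‖(z : ℕ → 𝕂) (m + n)‖ ^ p.toReal) ^ (1 / p.toReal)) atTop (𝓝 0) := by
    have := htail.rpow_const (p := 1 / p.toReal) (Or.inr (by positivity))
    rwa [Real.zero_rpow (by positivity)] at this
  apply squeeze_zero (fun n => norm_nonneg _)
    (g := fun n => K1 * (∑' m, ‖(z : ℕ → 𝕂) (m + n)‖ ^ p.toReal) ^ (1 / p.toReal))
  · intro n
    have := norm_iter_le_shift w T hT hp2 hK10 (hprod n) z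
    have h2 : ‖(⟨fun m => (z : ℕ → 𝕂) (m + n), shift_memℓp hp2 z n⟩ :
        lp (fun _ : ℕ => 𝕂) p)‖ = (∑' m, ‖(z : ℕ → 𝕂) (m + n)‖ ^ p.toReal) ^ (1 / p.toReal) :=
      lp.norm_eq_tsum_rpow h1 _
    rwa [h2] at this
  · simpa using htail2.const_mul K1

lemma not_liYorke (hp2 : p ≠ ⊤) {K : ℝ}
    (hK : ∀ i j : ℕ, i ≤ j → ‖∏ t ∈ Finset.Icc i j, w t‖ ≤ K) :
    ¬ LiYorkeChaotic T := by
  rintro ⟨S, hSc, hSp⟩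
  have hnt : S.Nontrivial := by
    by_contra h
    exact hSc (Set.not_nontrivial_iff.mp h).countable
  obtain ⟨x, hx, y, hy, hxy⟩ := hnt
  obtain ⟨-, h2⟩ := hSp hx hy hxy
  have hd : Tendsto (fun n => dist (T^[n] x) (T^[n] y)) atTop (𝓝 0) := by
    have := tendsto_iter_zero w T hT hp2 hK (x - y)
    simpa [dist_eq_norm, iter_sub w T hT] using this
  have he : Tendsto (fun n : ℕ => edist (T^[n] x) (T^[n] y)) atTop (𝓝 0) := by
    have := ENNReal.tendsto_ofReal hd
    simpa only [ENNReal.ofReal_zero, ← edist_dist] using this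
  rw [he.limsup_eq] at h2
  exact lt_irrefl _ h2


omit hT in
/-- coordinate evaluation as a continuous linear map -/
def coordCLM (m : ℕ) : lp (fun _ : ℕ => 𝕂) p →L[𝕂] 𝕂 :=
  LinearMap.mkContinuous
    { toFun := fun f => (f : ℕ → 𝕂) m
      map_add' := fun f g => by
        have := lp.coeFn_add f g
        simp only [this, Pi.add_apply]
      map_smul' := fun c f => by
        have := lp.coeFn_smul c f
        simp only [this, Pi.smul_apply, smul_eq_mul, RingHom.id_apply] }
    1 (fun f => by
      simpa using lp.norm_apply_le_norm (zero_lt_one.trans_le (Fact.out : 1 ≤ p)).ne' f m)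

set_option maxHeartbeats 1000000 in
lemma chaotic_of_sup (hp2 : p ≠ ⊤) {C : ℝ} (hwC : ∀ n, ‖w n‖ ≤ C)
    (hsup : (⨆ (i : ℕ) (j : ℕ) (_ : i ≤ j),
        (‖∏ t ∈ Finset.Icc i j, w t‖₊ : ℝ≥0∞)) = ⊤) :
    LiYorkeChaotic T := by
  have hpt : 0 < p.toReal :=
    ENNReal.toReal_pos (zero_lt_one.trans_le (Fact.out : 1 ≤ p)).ne' hp2
  have hp0 : p ≠ 0 := (zero_lt_one.trans_le (Fact.out : 1 ≤ p)).ne'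
  set C1 : ℝ := max C 2 with hC1
  have hC12 : (2:ℝ) ≤ C1 := le_max_right _ _
  have hC10 : (0:ℝ) < C1 := lt_of_lt_of_le two_pos hC12
  have hC11 : (1:ℝ) < C1 := lt_of_lt_of_le one_lt_two hC12
  have hw : ∀ n, ‖w n‖ ≤ C1 := fun n => (hwC n).trans (le_max_left _ _)
  have hprodle : ∀ s : Finset ℕ, ‖∏ t ∈ s, w t‖ ≤ C1 ^ s.card := by
    intro s
    rw [norm_prod]
    calc ∏ t ∈ s, ‖w t‖ ≤ ∏ _t ∈ s, C1 :=
          Finset.prod_le_prod (fun i _ => norm_nonneg _) (fun i _ => hw i)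
      _ = C1 ^ s.card := Finset.prod_const C1
  -- arbitrarily large products with arbitrarily large right endpoint
  have hbig : ∀ N k : ℕ, ∃ q : ℕ × ℕ, q.1 ≤ q.2 ∧ N < q.2 ∧
      C1 ^ (k + N + 2) < ‖∏ t ∈ Finset.Icc q.1 q.2, w t‖ := by
    intro N k
    by_contra hcon
    push_neg at hcon
    set B : ℝ := C1 ^ (k + N + 2) + C1 ^ (N + 1) with hB
    have hBnn : 0 ≤ B := by positivity
    have hall : ∀ i j : ℕ, i ≤ j → ‖∏ t ∈ Finset.Icc i j, w t‖ ≤ B := by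
      intro i j hij
      by_cases hjN : j ≤ N
      · refine le_trans ((hprodle _).trans ?_) (le_add_of_nonneg_left (by positivity))
        rw [Nat.card_Icc]
        exact pow_le_pow_right₀ hC11.le (by omega)
      · refine le_trans (hcon (i, j) hij (by omega)) (le_add_of_nonneg_right (by positivity))
    have hle : (⨆ (i : ℕ) (j : ℕ) (_ : i ≤ j),
        (‖∏ t ∈ Finset.Icc i j, w t‖₊ : ℝ≥0∞)) ≤ ENNReal.ofReal B := by
      refine iSup_le fun i => iSup_le fun j => iSup_le fun hij => ?_
      rw [← enorm_eq_nnnorm, ← ofReal_norm]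
      exact ENNReal.ofReal_le_ofReal (hall i j hij)
    rw [hsup] at hle
    exact (ENNReal.ofReal_lt_top).not_ge hle
  -- recursive construction
  set F : ℕ → ℕ × ℕ := fun k =>
    Nat.rec ((hbig 0 0).choose) (fun k ih => (hbig ih.2 (k + 1)).choose) k with hF
  set I : ℕ → ℕ := fun k => (F k).1 with hI
  set J : ℕ → ℕ := fun k => (F k).2 with hJ
  set prevJ : ℕ → ℕ := fun k => Nat.casesOn k 0 (fun k' => J k') with hprevJ
  have hF0 : F 0 = (hbig 0 0).choose := rfl
  have hFs : ∀ k, F (k + 1) = (hbig (J k) (k + 1)).choose := fun k => rfl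
  have hspec : ∀ k, I k ≤ J k ∧ prevJ k < J k ∧
      C1 ^ (k + prevJ k + 2) < ‖∏ t ∈ Finset.Icc (I k) (J k), w t‖ := by
    intro k
    cases k with
    | zero => exact (hbig 0 0).choose_spec
    | succ k => exact (hbig (J k) (k + 1)).choose_spec
  have hiJ : ∀ k, I k ≤ J k := fun k => (hspec k).1
  have hJmono : StrictMono J := strictMono_nat_of_lt_succ (fun k => (hspec (k + 1)).2.1)
  have hJk : ∀ k, k ≤ J k := fun k => hJmono.le_apply
  have hgt : ∀ k, C1 ^ (k + prevJ k + 2) < ‖∏ t ∈ Finset.Icc (I k) (J k), w t‖ :=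
    fun k => (hspec k).2.2
  -- the weights
  set ε : ℕ → ℝ := fun k => (C1 ^ (k + prevJ k + 2))⁻¹ with hε
  have hεpos : ∀ k, 0 < ε k := fun k => by positivity
  have hεle : ∀ k, ε k ≤ (2:ℝ)⁻¹ ^ k := by
    intro k
    rw [hε, inv_pow]
    apply inv_anti₀ (by positivity)
    calc (2:ℝ) ^ k ≤ C1 ^ k := pow_le_pow_left₀ (by norm_num) hC12 k
      _ ≤ C1 ^ (k + prevJ k + 2) := pow_le_pow_right₀ hC11.le (by omega)
  set s : ℕ → lp (fun _ : ℕ => 𝕂) p := fun k =>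
    lp.single p (J k + 1) ((ε k : ℝ) : 𝕂) with hs
  have hsnorm : ∀ k, ‖s k‖ = ε k := by
    intro k
    have := lp.norm_single (E := fun _ : ℕ => 𝕂) (pos_iff_ne_zero.mpr hp0) (J k + 1) ((ε k : ℝ) : 𝕂)
    rw [hs]
    simpa [RCLike.norm_ofReal, abs_of_pos (hεpos k)] using this
  have hssum : Summable s := by
    apply Summable.of_norm_bounded (g := fun k => (2:ℝ)⁻¹ ^ k)
      (summable_geometric_of_lt_one (by norm_num) (by norm_num))
    intro k; rw [hsnorm k]; exact hεle k
  set x : lp (fun _ : ℕ => 𝕂) p := ∑' k, s k with hx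
  -- coordinates of x
  have hcoord : ∀ m, (x : ℕ → 𝕂) m = ∑' k, (s k : ℕ → 𝕂) m := by
    intro m
    have := (coordCLM (𝕂 := 𝕂) (p := p) m).map_tsum hssum
    exact this
  have hxat : ∀ k, (x : ℕ → 𝕂) (J k + 1) = ((ε k : ℝ) : 𝕂) := by
    intro k
    rw [hcoord]
    rw [tsum_eq_single k]
    · rw [hs]; exact lp.single_apply_self p (J k + 1) _
    · intro l hl
      rw [hs]
      refine lp.single_apply_ne p (J l + 1) _ ?_
      intro h
      exact hl (hJmono.injective (by omega))
  have hxne : x ≠ 0 := by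
    intro h0
    have := hxat 0
    rw [h0] at this
    simp only [lp.coeFn_zero, Pi.zero_apply] at this
    exact (hεpos 0).ne' (by exact_mod_cast this.symm)
  -- upper estimate along n = J k + 2
  have hupper : ∀ k : ℕ, ‖T^[J k + 2] x‖ ≤ (2:ℝ)⁻¹ ^ k := by
    intro k
    set n := J k + 2 with hn
    set x' : lp (fun _ : ℕ => 𝕂) p := ∑' l, s (l + (k + 1)) with hx'
    have hssum' : Summable fun l => s (l + (k + 1)) := (summable_nat_add_iff (k + 1)).2 hssum
    have hxsplit : x = (∑ l ∈ Finset.range (k + 1), s l) + x' :=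
      (Summable.sum_add_tsum_nat_add (k + 1) hssum).symm
    have hcoords : ∀ m, n ≤ m → (x : ℕ → 𝕂) m = (x' : ℕ → 𝕂) m := by
      intro m hm
      rw [hxsplit, lp.coeFn_add, Pi.add_apply, lp.coeFn_sum, Finset.sum_apply]
      have hz : ∀ l ∈ Finset.range (k + 1), (s l : ℕ → 𝕂) m = 0 := by
        intro l hl
        refine lp.single_apply_ne p (J l + 1) _ ?_
        have := hJmono.monotone (Nat.lt_succ_iff.mp (Finset.mem_range.mp hl))
        omega
      rw [Finset.sum_congr rfl hz]
      simp
    have hTeq : T^[n] x = T^[n] x' := by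
      apply lp.ext
      funext m
      rw [iter_apply w T hT n x m, iter_apply w T hT n x' m, hcoords (m + n) (by omega)]
    have hb : ∀ l : ℕ, ‖s (l + (k + 1))‖ ≤
        (C1 ^ n)⁻¹ * ((2:ℝ)⁻¹ ^ (k + 1) * (2:ℝ)⁻¹ ^ l) := by
      intro l
      have hpj : prevJ (l + (k + 1)) = J (l + k) := rfl
      have hJlk : J k ≤ J (l + k) := hJmono.monotone (by omega)
      have h1 : C1 ^ n * 2 ^ (l + (k + 1)) ≤
          C1 ^ ((l + (k + 1)) + prevJ (l + (k + 1)) + 2) := by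
        rw [hpj]
        calc C1 ^ n * 2 ^ (l + (k + 1)) ≤ C1 ^ n * C1 ^ (l + (k + 1)) := by
              apply mul_le_mul_of_nonneg_left (pow_le_pow_left₀ (by norm_num) hC12 _)
                (by positivity)
          _ = C1 ^ (n + (l + (k + 1))) := (pow_add C1 _ _).symm
          _ ≤ C1 ^ ((l + (k + 1)) + J (l + k) + 2) :=
              pow_le_pow_right₀ hC11.le (by omega)
      rw [hsnorm]
      calc ε (l + (k + 1)) ≤ (C1 ^ n * 2 ^ (l + (k + 1)))⁻¹ := by
            rw [hε]
            exact inv_anti₀ (by positivity) h1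
        _ = (C1 ^ n)⁻¹ * ((2:ℝ)⁻¹ ^ (k + 1) * (2:ℝ)⁻¹ ^ l) := by
            rw [mul_inv, ← inv_pow, pow_add]
            ring_nf; simp only [one_div]
    have hbsum : Summable fun l : ℕ =>
        (C1 ^ n)⁻¹ * ((2:ℝ)⁻¹ ^ (k + 1) * (2:ℝ)⁻¹ ^ l) :=
      ((summable_geometric_of_lt_one (by norm_num) (by norm_num)).mul_left _).mul_left _
    have hx'norm : ‖x'‖ ≤ (C1 ^ n)⁻¹ * ((2:ℝ)⁻¹ ^ (k + 1) * 2) := by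
      have h2 := norm_tsum_le_tsum_norm (f := fun l => s (l + (k + 1)))
        (Summable.of_nonneg_of_le (fun l => norm_nonneg _) hb hbsum)
      refine h2.trans ?_
      have h3 : ∑' l : ℕ, (C1 ^ n)⁻¹ * ((2:ℝ)⁻¹ ^ (k + 1) * (2:ℝ)⁻¹ ^ l) =
          (C1 ^ n)⁻¹ * ((2:ℝ)⁻¹ ^ (k + 1) * 2) := by
        rw [tsum_mul_left, tsum_mul_left, tsum_geometric_of_lt_one (by norm_num) (by norm_num)]
        norm_num
      rw [← h3]
      exact Summable.tsum_le_tsum hb (Summable.of_nonneg_of_le (fun l => norm_nonneg _) hb hbsum) hbsum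
    have hiter : ‖T^[n] x'‖ ≤ C1 ^ n * ‖x'‖ := by
      apply norm_iter_le w T hT hp2 (by positivity)
      intro m
      calc ‖∏ t ∈ Finset.Ico m (m + n), w t‖ ≤ C1 ^ (Finset.Ico m (m + n)).card :=
            hprodle _
        _ = C1 ^ n := by rw [Nat.card_Ico]; congr 1; omega
    rw [hTeq]
    calc ‖T^[n] x'‖ ≤ C1 ^ n * ‖x'‖ := hiter
      _ ≤ C1 ^ n * ((C1 ^ n)⁻¹ * ((2:ℝ)⁻¹ ^ (k + 1) * 2)) :=
          mul_le_mul_of_nonneg_left hx'norm (by positivity)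
      _ = (2:ℝ)⁻¹ ^ k := by
          rw [← mul_assoc, mul_inv_cancel₀ (by positivity), one_mul, pow_succ]
          ring
  -- lower estimate along n = J k + 1 - I k
  have hlower : ∀ k : ℕ, 1 ≤ ‖T^[J k + 1 - I k] x‖ := by
    intro k
    set n := J k + 1 - I k with hn
    have hIn : I k + n = J k + 1 := by have := hiJ k; omega
    have hcoord2 : (T^[n] x : ℕ → 𝕂) (I k) =
        (∏ t ∈ Finset.Icc (I k) (J k), w t) * ((ε k : ℝ) : 𝕂) := by
      rw [iter_apply w T hT n x (I k), hIn, hxat k, ← Finset.Ico_add_one_right_eq_Icc]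
    have h1 : 1 ≤ ‖(T^[n] x : ℕ → 𝕂) (I k)‖ := by
      rw [hcoord2, norm_mul, RCLike.norm_ofReal, abs_of_pos (hεpos k)]
      have h2 : C1 ^ (k + prevJ k + 2) * ε k ≤
          ‖∏ t ∈ Finset.Icc (I k) (J k), w t‖ * ε k :=
        mul_le_mul_of_nonneg_right (hgt k).le (hεpos k).le
      rwa [hε, mul_inv_cancel₀ (by positivity)] at h2
    exact h1.trans (lp.norm_apply_le_norm hp0 (T^[n] x) (I k))
  have hnk : ∀ k : ℕ, k + 1 ≤ J k + 1 - I k := by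
    intro k
    have h1 : C1 ^ (k + prevJ k + 2) < C1 ^ (J k + 1 - I k) := by
      refine lt_of_lt_of_le (hgt k) ?_
      calc ‖∏ t ∈ Finset.Icc (I k) (J k), w t‖ ≤ C1 ^ (Finset.Icc (I k) (J k)).card :=
            hprodle _
        _ = C1 ^ (J k + 1 - I k) := by rw [Nat.card_Icc]
    have := (pow_lt_pow_iff_right₀ hC11).mp h1
    omega
  -- the scrambled set
  refine ⟨(fun c : ℝ => ((c : 𝕂) • x)) '' Set.Icc (1:ℝ) 2, ?_, ?_⟩
  · -- uncountable
    intro hc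
    have hinj : Function.Injective (fun c : ℝ => ((c : 𝕂) • x)) := by
      intro c d h
      simp only at h
      have h2 := congrArg (fun z : lp (fun _ : ℕ => 𝕂) p => (z : ℕ → 𝕂) (J 0 + 1)) h
      simp only [lp.coeFn_smul, Pi.smul_apply, smul_eq_mul, hxat 0] at h2
      have hε0 : ((ε 0 : ℝ) : 𝕂) ≠ 0 := by
        exact_mod_cast RCLike.ofReal_ne_zero.mpr (hεpos 0).ne'
      exact RCLike.ofReal_inj.mp (mul_right_cancel₀ hε0 h2)
    have h3 : (Set.Icc (1:ℝ) 2).Countable := by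
      refine Set.Countable.mono ?_ (hc.preimage hinj)
      intro c hcmem
      exact Set.mem_preimage.mpr (Set.mem_image_of_mem _ hcmem)
    rw [← Cardinal.le_aleph0_iff_set_countable] at h3
    rw [Cardinal.mk_Icc_real (by norm_num : (1:ℝ) < 2)] at h3
    exact (Cardinal.aleph0_lt_continuum).not_ge h3
  · -- pairwise Li-Yorke
    rintro a ⟨c, hc, rfl⟩ b ⟨d, hd, rfl⟩ hab
    have hcd : c ≠ d := fun h => hab (by rw [h])
    set γ : 𝕂 := ((c - d : ℝ) : 𝕂) with hγdef
    have hγ : γ ≠ 0 := by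
      rw [hγdef]
      exact_mod_cast RCLike.ofReal_ne_zero.mpr (sub_ne_zero.mpr hcd)
    have key : ∀ n : ℕ, edist (T^[n] ((c : 𝕂) • x)) (T^[n] ((d : 𝕂) • x)) =
        (‖γ‖₊ : ℝ≥0∞) * (‖T^[n] x‖₊ : ℝ≥0∞) := by
      intro n
      rw [iter_smul w T hT n, iter_smul w T hT n, edist_eq_enorm_sub, enorm_eq_nnnorm, ← sub_smul]
      have hsub : (c : 𝕂) - (d : 𝕂) = γ := by rw [hγdef]; push_cast; ring_nf
      rw [hsub, nnnorm_smul, ENNReal.coe_mul]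
    constructor
    · -- liminf = 0
      refine le_antisymm ?_ zero_le
      have hφ : Tendsto (fun k => J k + 2) atTop atTop :=
        tendsto_atTop_mono (fun k => le_trans (hJk k) (Nat.le_add_right _ 2)) tendsto_id
      have hereal : Tendsto (fun k => ‖γ‖ * ‖T^[J k + 2] x‖) atTop (𝓝 0) := by
        have hg0 : Tendsto (fun k => ‖T^[J k + 2] x‖) atTop (𝓝 0) := by
          apply squeeze_zero (fun k => norm_nonneg _) hupper
          exact tendsto_pow_atTop_nhds_zero_of_lt_one (by norm_num) (by norm_num)
        have h6 := hg0.const_mul ‖γ‖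
        rwa [mul_zero] at h6
      have hU : Tendsto (fun k => edist (T^[J k + 2] ((c : 𝕂) • x))
          (T^[J k + 2] ((d : 𝕂) • x))) atTop (𝓝 0) := by
        have h5 : ∀ k : ℕ, edist (T^[J k + 2] ((c : 𝕂) • x)) (T^[J k + 2] ((d : 𝕂) • x)) =
            ENNReal.ofReal (‖γ‖ * ‖T^[J k + 2] x‖) := by
          intro k
          rw [key (J k + 2), ← enorm_eq_nnnorm, ← enorm_eq_nnnorm, ← ofReal_norm, ← ofReal_norm,
            ← ENNReal.ofReal_mul (norm_nonneg _)]
        simp only [h5]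
        have h7 := ENNReal.tendsto_ofReal hereal
        rwa [ENNReal.ofReal_zero] at h7
      refine le_of_forall_gt_imp_ge_of_dense fun δ hδ => ?_
      refine liminf_le_of_frequently_le' ?_
      have hev : ∀ᶠ k in atTop, edist (T^[J k + 2] ((c : 𝕂) • x))
          (T^[J k + 2] ((d : 𝕂) • x)) ≤ δ :=
        hU.eventually (eventually_le_nhds hδ)
      exact hφ.frequently hev.frequently
    · -- limsup > 0
      have hpos : (0:ℝ≥0∞) < (‖γ‖₊ : ℝ≥0∞) := by
        rw [ENNReal.coe_pos]
        exact nnnorm_pos.mpr hγ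
      refine lt_of_lt_of_le hpos (le_limsup_of_frequently_le' ?_)
      rw [frequently_atTop]
      intro b
      refine ⟨J b + 1 - I b, by have := hnk b; omega, ?_⟩
      rw [key]
      have h1 : (1:ℝ≥0∞) ≤ (‖T^[J b + 1 - I b] x‖₊ : ℝ≥0∞) := by
        rw [← ENNReal.coe_one, ENNReal.coe_le_coe]
        have := hlower b
        exact_mod_cast this
      exact le_mul_of_one_le_right zero_le h1


end LYAux
end withT

theorem unilateral_shift_lp_liYorke_iff
    {𝕂 : Type} [RCLike 𝕂] (p : ℝ≥0∞) [Fact (1 ≤ p)] (hp2 : p ≠ ⊤)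
    (w : ℕ → 𝕂) (hwb : ∃ C : ℝ, ∀ n, ‖w n‖ ≤ C)
    (T : lp (fun _ : ℕ => 𝕂) p → lp (fun _ : ℕ => 𝕂) p)
    (hT : ∀ (x : lp (fun _ : ℕ => 𝕂) p) (n : ℕ),
      (T x : ℕ → 𝕂) n = w n * (x : ℕ → 𝕂) (n + 1)) :
    LiYorkeChaotic T ↔
      (⨆ (i : ℕ) (j : ℕ) (_ : i ≤ j), (‖∏ t ∈ Finset.Icc i j, w t‖₊ : ℝ≥0∞)) = ⊤ := by
  constructor
  · intro hch
    by_contra hne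
    set Ksup := (⨆ (i : ℕ) (j : ℕ) (_ : i ≤ j),
      (‖∏ t ∈ Finset.Icc i j, w t‖₊ : ℝ≥0∞)) with hKsup
    have hK : ∀ i j : ℕ, i ≤ j → ‖∏ t ∈ Finset.Icc i j, w t‖ ≤ Ksup.toReal := by
      intro i j hij
      have hle : (‖∏ t ∈ Finset.Icc i j, w t‖₊ : ℝ≥0∞) ≤ Ksup :=
        le_iSup_of_le i (le_iSup_of_le j (le_iSup_of_le hij le_rfl))
      have := ENNReal.toReal_mono hne hle
      simpa using this
    exact absurd hch (LYAux.not_liYorke w T hT hp2 hK)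
  · intro hsup
    exact LYAux.chaotic_of_sup w T hT hp2 hwb.choose_spec hsup
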